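/- Let α ∈ (0,2) and k ≥ 1 an integer. Then Γ(1+α)Γ(k+1)/(Γ(1+α/2)Γ(k+1+α/2)) < 1. Conversely, if α ∈ (-1,0), then Γ(1+α)Γ(k+1)/(Γ(1+α/2)Γ(k+1+α/2)) > 1. -/

import Mathlib

open Real MeasureTheory

noncomputable def rbeta (a b : ℝ) : ℝ := ∫ t in (0:ℝ)..1, t ^ (a-1) * (1-t) ^ (b-1)

lemma rbInt {a b : ℝ} (ha : 0 < a) (hb : 0 < b) :
    IntervalIntegrable (fun t : ℝ => t ^ (a-1) * (1-t) ^ (b-1)) volume 0 1 := by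
  have h := (Complex.betaIntegral_convergent (u := (a:ℂ)) (v := (b:ℂ))
    (by simpa using ha) (by simpa using hb)).norm
  rw [intervalIntegrable_iff_integrableOn_Ioo_of_le zero_le_one] at h ⊢
  refine h.congr_fun (fun t ht => ?_) measurableSet_Ioo
  obtain ⟨ht0, ht1⟩ := ht
  have h1t : (0:ℝ) < 1 - t := by linarith
  simp only [norm_mul]
  have e1 : ((t:ℂ)) ^ ((a:ℂ) - 1) = (t:ℂ) ^ (((a-1:ℝ)):ℂ) := by push_cast; ring_nf
  have e2 : (1 - (t:ℂ)) ^ ((b:ℂ) - 1) = (((1-t:ℝ)):ℂ) ^ (((b-1:ℝ)):ℂ) := by push_cast; ring_nf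
  rw [e1, e2, Complex.norm_cpow_eq_rpow_re_of_pos ht0, Complex.norm_cpow_eq_rpow_re_of_pos h1t]
  simp

lemma rbEq {a b : ℝ} (ha : 0 < a) (hb : 0 < b) :
    Real.Gamma a * Real.Gamma b = Real.Gamma (a+b) * rbeta a b := by
  have h := Complex.Gamma_mul_Gamma_eq_betaIntegral (s := (a:ℂ)) (t := (b:ℂ))
    (by simpa using ha) (by simpa using hb)
  have hB : Complex.betaIntegral a b = ((rbeta a b : ℝ) : ℂ) := by
    rw [Complex.betaIntegral, rbeta, ← intervalIntegral.integral_ofReal]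
    refine intervalIntegral.integral_congr (fun t ht => ?_)
    rw [Set.uIcc_of_le zero_le_one] at ht
    have ht0 : (0:ℝ) ≤ t := ht.1
    have h1t : (0:ℝ) ≤ 1 - t := by linarith [ht.2]
    have e1 : ((t:ℂ)) ^ ((a:ℂ) - 1) = (t:ℂ) ^ (((a-1:ℝ)):ℂ) := by push_cast; ring_nf
    have e2 : (1 - (t:ℂ)) ^ ((b:ℂ) - 1) = (((1-t:ℝ)):ℂ) ^ (((b-1:ℝ)):ℂ) := by push_cast; ring_nf
    rw [e1, e2, ← Complex.ofReal_cpow ht0, ← Complex.ofReal_cpow h1t]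
    push_cast
    ring
  rw [hB] at h
  rw [← Complex.ofReal_inj]
  push_cast
  simpa [Complex.Gamma_ofReal, ← Complex.ofReal_add] using h

lemma rbLt {x y s : ℝ} (hx : 0 < x) (hxy : x < y) (hs : 0 < s) :
    rbeta y s < rbeta x s := by
  have h1 := rbInt hx hs
  have h2 := rbInt (hx.trans hxy) hs
  have key : 0 < ∫ t in (0:ℝ)..1,
      (t ^ (x-1) * (1-t) ^ (s-1) - t ^ (y-1) * (1-t) ^ (s-1)) := by
    refine intervalIntegral.intervalIntegral_pos_of_pos_on (h1.sub h2) (fun t ht => ?_) zero_lt_one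
    obtain ⟨ht0, ht1⟩ := ht
    have hlt : t ^ (y-1) < t ^ (x-1) :=
      Real.rpow_lt_rpow_of_exponent_gt ht0 ht1 (by linarith)
    have hpos : (0:ℝ) < (1-t) ^ (s-1) := Real.rpow_pos_of_pos (by linarith) _
    nlinarith
  rw [intervalIntegral.integral_sub h1 h2] at key
  simp only [rbeta]
  linarith

theorem stmt_15 (α : ℝ) (k : ℕ) (hk : 1 ≤ k) :
    (α ∈ Set.Ioo (0 : ℝ) 2 →
      Real.Gamma (1 + α) * Real.Gamma ((k : ℝ) + 1) /
        (Real.Gamma (1 + α / 2) * Real.Gamma ((k : ℝ) + 1 + α / 2)) < 1) ∧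
    (α ∈ Set.Ioo (-1 : ℝ) 0 →
      Real.Gamma (1 + α) * Real.Gamma ((k : ℝ) + 1) /
        (Real.Gamma (1 + α / 2) * Real.Gamma ((k : ℝ) + 1 + α / 2)) > 1) := by
  have hk1 : (1:ℝ) ≤ (k:ℝ) := by exact_mod_cast hk
  constructor
  · rintro ⟨h0, h2⟩
    have hs : (0:ℝ) < α / 2 := by linarith
    have hQ1 : (0:ℝ) < 1 + α / 2 := by linarith
    have hQ2 : (0:ℝ) < (k:ℝ) + 1 + α / 2 := by linarith
    have hGQ : 0 < Real.Gamma (1 + α / 2) * Real.Gamma ((k:ℝ) + 1 + α / 2) :=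
      mul_pos (Real.Gamma_pos_of_pos hQ1) (Real.Gamma_pos_of_pos hQ2)
    rw [div_lt_one hGQ]
    have E1 : Real.Gamma (1 + α/2) * Real.Gamma (α/2)
        = Real.Gamma (1 + α) * rbeta (1 + α/2) (α/2) := by
      have := rbEq hQ1 hs
      rwa [show (1 + α/2) + α/2 = 1 + α by ring] at this
    have E2 : Real.Gamma ((k:ℝ) + 1) * Real.Gamma (α/2)
        = Real.Gamma ((k:ℝ) + 1 + α/2) * rbeta ((k:ℝ)+1) (α/2) := by
      have := rbEq (a := (k:ℝ)+1) (by linarith) hs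
      rwa [show ((k:ℝ) + 1) + α/2 = (k:ℝ) + 1 + α/2 by ring] at this
    have hBlt : rbeta ((k:ℝ)+1) (α/2) < rbeta (1 + α/2) (α/2) :=
      rbLt hQ1 (by linarith) hs
    have hGs : 0 < Real.Gamma (α/2) := Real.Gamma_pos_of_pos hs
    have hG1 : 0 < Real.Gamma (1 + α) := Real.Gamma_pos_of_pos (by linarith)
    have hGk : 0 < Real.Gamma ((k:ℝ) + 1) := Real.Gamma_pos_of_pos (by linarith)
    have hGks : 0 < Real.Gamma ((k:ℝ) + 1 + α/2) := Real.Gamma_pos_of_pos hQ2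
    rw [← mul_lt_mul_iff_left₀ hGs]
    calc Real.Gamma (1 + α) * Real.Gamma ((k:ℝ) + 1) * Real.Gamma (α/2)
        = Real.Gamma (1 + α) * (Real.Gamma ((k:ℝ) + 1 + α/2) * rbeta ((k:ℝ)+1) (α/2)) := by
          rw [mul_assoc, E2]
      _ < Real.Gamma (1 + α) * (Real.Gamma ((k:ℝ) + 1 + α/2) * rbeta (1 + α/2) (α/2)) := by
          have := mul_pos hG1 hGks
          nlinarith
      _ = Real.Gamma (1 + α/2) * Real.Gamma ((k:ℝ) + 1 + α/2) * Real.Gamma (α/2) := by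
          nlinarith [E1]
  · rintro ⟨hm1, h0⟩
    have hs : (0:ℝ) < -α / 2 := by linarith
    have hQ1 : (0:ℝ) < 1 + α / 2 := by linarith
    have hQ2 : (0:ℝ) < (k:ℝ) + 1 + α / 2 := by linarith
    have h1a : (0:ℝ) < 1 + α := by linarith
    have hGQ : 0 < Real.Gamma (1 + α / 2) * Real.Gamma ((k:ℝ) + 1 + α / 2) :=
      mul_pos (Real.Gamma_pos_of_pos hQ1) (Real.Gamma_pos_of_pos hQ2)
    rw [gt_iff_lt, one_lt_div hGQ]
    have E1 : Real.Gamma (1 + α) * Real.Gamma (-α/2)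
        = Real.Gamma (1 + α/2) * rbeta (1 + α) (-α/2) := by
      have := rbEq h1a hs
      rwa [show (1 + α) + -α/2 = 1 + α/2 by ring] at this
    have E2 : Real.Gamma ((k:ℝ) + 1 + α/2) * Real.Gamma (-α/2)
        = Real.Gamma ((k:ℝ) + 1) * rbeta ((k:ℝ)+1+α/2) (-α/2) := by
      have := rbEq (a := (k:ℝ)+1+α/2) hQ2 hs
      rwa [show ((k:ℝ) + 1 + α/2) + -α/2 = (k:ℝ) + 1 by ring] at this
    have hBlt : rbeta ((k:ℝ)+1+α/2) (-α/2) < rbeta (1 + α) (-α/2) :=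
      rbLt h1a (by linarith) hs
    have hGs : 0 < Real.Gamma (-α/2) := Real.Gamma_pos_of_pos hs
    have hG1 : 0 < Real.Gamma (1 + α) := Real.Gamma_pos_of_pos h1a
    have hGk : 0 < Real.Gamma ((k:ℝ) + 1) := Real.Gamma_pos_of_pos (by linarith)
    have hG1h : 0 < Real.Gamma (1 + α/2) := Real.Gamma_pos_of_pos hQ1
    rw [← mul_lt_mul_iff_left₀ hGs]
    calc Real.Gamma (1 + α/2) * Real.Gamma ((k:ℝ) + 1 + α/2) * Real.Gamma (-α/2)
        = Real.Gamma (1 + α/2) * (Real.Gamma ((k:ℝ) + 1) * rbeta ((k:ℝ)+1+α/2) (-α/2)) := by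
          rw [mul_assoc, E2]
      _ < Real.Gamma (1 + α/2) * (Real.Gamma ((k:ℝ) + 1) * rbeta (1 + α) (-α/2)) := by
          have := mul_pos hG1h hGk
          nlinarith
      _ = Real.Gamma (1 + α) * Real.Gamma ((k:ℝ) + 1) * Real.Gamma (-α/2) := by
          nlinarith [E1]
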